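/- Let F : ℝ^K → ℝ be differentiable, and define the Bregman divergence D_F(x‖y) = F(x) − F(y) − ⟨x − y, ∇F(y)⟩. Fix prototypes d_1, …, d_M ∈ ℝ^K and set, for each c: the center c_c = ∇F(d_c)/2, the scalar a_c = ⟨d_c, ∇F(d_c)⟩ − F(d_c), and the weight w_c = ‖∇F(d_c)‖²/4 − a_c. Then for all x ∈ ℝ^K and all indices i, j: D_F(x‖d_i) ≤ D_F(x‖d_j) if and only if ‖x − c_i‖² − w_i ≤ ‖x − c_j‖² − w_j. Consequently the Type-1 Bregman Voronoi argmin set {c : ∀ c', D_F(x‖d_c) ≤ D_F(x‖d_{c'})} coincides with the additively-weighted Euclidean Voronoi argmin set for centers c_c and weights w_c; in particular each pairwise bisector {x : D_F(x‖d_i) = D_F(x‖d_j)} is an affine hyperplane (when ∇F(d_i) ≠ ∇F(d_j)). -/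
import Mathlib


open scoped RealInnerProductSpace

/-- Bregman divergence of a differentiable generator `F`:
`D_F(x‖y) = F x − F y − ⟨x − y, ∇F y⟩`. -/
noncomputable def bregman {K : ℕ} (F : EuclideanSpace ℝ (Fin K) → ℝ)
    (x y : EuclideanSpace ℝ (Fin K)) : ℝ :=
  F x - F y - ⟪x - y, gradient F y⟫

/-- Center of the affine (weighted Euclidean) reformulation: `c_c = ∇F(d_c)/2`. -/
noncomputable def ctr {K M : ℕ} (F : EuclideanSpace ℝ (Fin K) → ℝ)
    (dproto : Fin M → EuclideanSpace ℝ (Fin K)) (c : Fin M) :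
    EuclideanSpace ℝ (Fin K) :=
  (1 / 2 : ℝ) • gradient F (dproto c)

/-- Weight of the affine reformulation:
`w_c = ‖∇F(d_c)‖²/4 − a_c` with `a_c = ⟨d_c, ∇F(d_c)⟩ − F(d_c)`. -/
noncomputable def wgt {K M : ℕ} (F : EuclideanSpace ℝ (Fin K) → ℝ)
    (dproto : Fin M → EuclideanSpace ℝ (Fin K)) (c : Fin M) : ℝ :=
  ‖gradient F (dproto c)‖ ^ 2 / 4 - (⟪dproto c, gradient F (dproto c)⟫ - F (dproto c))

/-- **Affine half-space reformulation of Type-1 Bregman Voronoi diagrams.**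
For differentiable `F` and prototypes `d_1,…,d_M`:
`D_F(x‖d_i) ≤ D_F(x‖d_j) ↔ ‖x−c_i‖²−w_i ≤ ‖x−c_j‖²−w_j`; hence the Type-1
Bregman Voronoi argmin sets coincide with the additively-weighted Euclidean
Voronoi argmin sets, and each pairwise bisector is an affine hyperplane
whenever `∇F(d_i) ≠ ∇F(d_j)`. -/
private lemma key {K M : ℕ} (F : EuclideanSpace ℝ (Fin K) → ℝ)
    (dproto : Fin M → EuclideanSpace ℝ (Fin K)) (x : EuclideanSpace ℝ (Fin K))
    (c : Fin M) :
    ‖x - ctr F dproto c‖ ^ 2 - wgt F dproto c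
      = bregman F x (dproto c) - F x + ‖x‖ ^ 2 := by
  unfold bregman ctr wgt
  rw [@norm_sub_sq_real, inner_sub_left, real_inner_smul_right, norm_smul]
  simp [Real.norm_eq_abs]
  ring

theorem bregman_affine_reformulation (K M : ℕ)
    (F : EuclideanSpace ℝ (Fin K) → ℝ) (hF : Differentiable ℝ F)
    (dproto : Fin M → EuclideanSpace ℝ (Fin K)) :
    (∀ (x : EuclideanSpace ℝ (Fin K)) (i j : Fin M),
      bregman F x (dproto i) ≤ bregman F x (dproto j) ↔
        ‖x - ctr F dproto i‖ ^ 2 - wgt F dproto i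
          ≤ ‖x - ctr F dproto j‖ ^ 2 - wgt F dproto j) ∧
    (∀ x : EuclideanSpace ℝ (Fin K),
      {c : Fin M | ∀ c', bregman F x (dproto c) ≤ bregman F x (dproto c')} =
      {c : Fin M | ∀ c',
        ‖x - ctr F dproto c‖ ^ 2 - wgt F dproto c
          ≤ ‖x - ctr F dproto c'‖ ^ 2 - wgt F dproto c'}) ∧
    (∀ i j : Fin M, gradient F (dproto i) ≠ gradient F (dproto j) →
      ∃ (v : EuclideanSpace ℝ (Fin K)) (b : ℝ), v ≠ 0 ∧
        {x : EuclideanSpace ℝ (Fin K) |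
          bregman F x (dproto i) = bregman F x (dproto j)} =
        {x : EuclideanSpace ℝ (Fin K) | ⟪v, x⟫ = b}) := by
  refine ⟨fun x i j => ?_, fun x => ?_, fun i j hij => ?_⟩
  · rw [key, key]; constructor <;> intro h <;> linarith
  · ext c
    simp only [Set.mem_setOf_eq]
    constructor <;> intro h c' <;> have := h c' <;> rw [key, key] at * <;> linarith
  · refine ⟨gradient F (dproto j) - gradient F (dproto i),
      (⟪dproto j, gradient F (dproto j)⟫ - F (dproto j))
        - (⟪dproto i, gradient F (dproto i)⟫ - F (dproto i)), sub_ne_zero.mpr hij.symm, ?_⟩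
    ext x
    simp only [Set.mem_setOf_eq]
    unfold bregman
    simp only [inner_sub_left, inner_sub_right, real_inner_comm x]
    constructor <;> intro h <;> linarith
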